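/- For every n ≥ 2, the word τ^{2n}(0) is not 2-irreducibly square-free, where τ(0)=012, τ(1)=02, τ(2)=1. -/

import Mathlib

/-- A word has a square if some nonempty `u` with `u ++ u` an infix. -/
def HasSquare (w : List (Fin 3)) : Prop :=
  ∃ u : List (Fin 3), u ≠ [] ∧ (u ++ u) <:+: w

def SquareFree (w : List (Fin 3)) : Prop := ¬ HasSquare w

/-- `u` occurs as a factor of the infinite word `x`. -/
def InfFactor (u : List (Fin 3)) (x : ℕ → Fin 3) : Prop :=
  ∃ m : ℕ, ∀ i < u.length, u.getD i 0 = x (m + i)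

def InfSquareFree (x : ℕ → Fin 3) : Prop :=
  ¬ ∃ u : List (Fin 3), u ≠ [] ∧ InfFactor (u ++ u) x

/-- A square-free word is irreducibly square-free if deleting any interior
letter creates a square. -/
def IrrSF (w : List (Fin 3)) : Prop :=
  SquareFree w ∧
    ∀ (w1 w2 : List (Fin 3)) (a : Fin 3),
      w = w1 ++ [a] ++ w2 → w1 ≠ [] → w2 ≠ [] → HasSquare (w1 ++ w2)

/-- The Thue morphism τ(0)=012, τ(1)=02, τ(2)=1. -/
def tau : Fin 3 → List (Fin 3) := ![[0,1,2], [0,2], [1]]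

def tauW (w : List (Fin 3)) : List (Fin 3) := w.flatMap tau

/-- The Thue word `t = τ^ω(0)`: the `n`-th letter of the fixed point of τ. -/
def thue (n : ℕ) : Fin 3 := ((tauW^[n+1]) [0]).getD n 0

/-- A square-free word is 2-irreducibly square-free if deleting any interior
factor of length 2 creates a square. -/
def TwoIrrSF (w : List (Fin 3)) : Prop :=
  SquareFree w ∧
    ∀ (w1 v w2 : List (Fin 3)), w = w1 ++ v ++ w2 → v.length = 2 →
      w1 ≠ [] → w2 ≠ [] → HasSquare (w1 ++ w2)

lemma tauW_append (a b : List (Fin 3)) : tauW (a ++ b) = tauW a ++ tauW b := by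
  simp [tauW]

lemma ends_one : ∀ n, 1 ≤ n → ∃ p, (tauW^[2 * n]) [0] = p ++ [1] := by
  intro n hn
  induction n with
  | zero => omega
  | succ m ih =>
    rcases Nat.eq_or_lt_of_le hn with h | h
    · exact ⟨[0,1,2,0,2], by rw [← h]; rfl⟩
    · obtain ⟨p, hp⟩ := ih (by omega)
      refine ⟨tauW (tauW p) ++ [0,1,2], ?_⟩
      have : 2 * (m + 1) = 2 + 2 * m := by ring
      rw [this, Function.iterate_add_apply, hp]
      show tauW (tauW (p ++ [1])) = _
      rw [tauW_append]
      show tauW (tauW p ++ [0, 2]) = _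
      rw [tauW_append, List.append_assoc]
      rfl

theorem tau_even_powers_not_2irrSF (n : ℕ) (hn : 2 ≤ n) :
    ¬ TwoIrrSF ((tauW^[2 * n]) [0]) := by
  obtain ⟨p, hp⟩ := ends_one (n - 1) (by omega)
  have hform : (tauW^[2 * n]) [0] = tauW (tauW p) ++ [0, 1, 2, 1] := by
    have h2n : 2 * n = 2 + 2 * (n - 1) := by omega
    rw [h2n, Function.iterate_add_apply, hp]
    show tauW (tauW (p ++ [1])) = _
    rw [tauW_append]
    show tauW (tauW p ++ [0, 2]) = _
    rw [tauW_append]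
    rfl
  rintro ⟨hsf, h2⟩
  set q := tauW (tauW p) with hq
  have hsq : HasSquare ((q ++ [0]) ++ [1]) := by
    apply h2 (q ++ [0]) [1, 2] [1]
    · rw [hform]; simp
    · rfl
    · simp
    · simp
  obtain ⟨u, hu, hinf⟩ := hsq
  apply hsf
  refine ⟨u, hu, hinf.trans ?_⟩
  have hpre : (q ++ [0]) ++ [1] <+: (tauW^[2 * n]) [0] := by
    rw [hform]
    exact ⟨[2, 1], by simp⟩
  exact hpre.isInfix
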